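/- Let T be a tree on n vertices (n even) with a perfect matching given by the edge set M, and let f be a strong graceful labelling of T. Then an edge uv of T has odd edge label |f(u) − f(v)| if and only if uv ∈ M; equivalently, every edge of T not belonging to M receives an even label under f. -/
import Mathlib


open SimpleGraph

/-- A graceful labelling of a graph `G` with `m` edges: an injective function
`f` from the vertices into `{0, 1, …, m}` such that the induced edge labels
`|f u − f v|` are pairwise distinct over the edges. -/
def IsGracefulLabeling {V : Type} (G : SimpleGraph V) (f : V → ℕ) : Prop :=
  Function.Injective f ∧ (∀ v, f v ≤ G.edgeSet.ncard) ∧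
  ∀ u v x y : V, G.Adj u v → G.Adj x y →
    Nat.dist (f u) (f v) = Nat.dist (f x) (f y) → s(u, v) = s(x, y)

/-- A strong graceful labelling of `G` on `n` vertices with respect to a matching `M`:
a graceful labelling such that `f x + f y = n - 1` for every edge `xy ∈ M`. -/
def IsStrongGracefulLabeling {V : Type} [Fintype V] (G : SimpleGraph V)
    (M : G.Subgraph) (f : V → ℕ) : Prop :=
  IsGracefulLabeling G f ∧ ∀ x y : V, M.Adj x y → f x + f y = Fintype.card V - 1


private lemma card_odd_range (n : ℕ) :
    ((Finset.range n).filter (fun k => Odd k)).card = n / 2 := by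
  induction n with
  | zero => simp
  | succ n ih =>
    rw [Finset.range_add_one, Finset.filter_insert]
    by_cases h : Odd n
    · rw [if_pos h, Finset.card_insert_of_notMem (by simp), ih]
      rw [Nat.odd_iff] at h
      omega
    · rw [if_neg h, ih]
      rw [Nat.not_odd_iff] at h
      omega

private lemma matching_card {V : Type} [Fintype V] [DecidableEq V] {G : SimpleGraph V}
    {M : G.Subgraph} (hM : M.IsPerfectMatching) :
    2 * M.edgeSet.ncard = Fintype.card V := by
  classical
  have hu : ∀ v : V, ∃! w, M.Adj v w := Subgraph.isPerfectMatching_iff.mp hM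
  set t : V → Sym2 V := fun v => s(v, (hu v).choose) with ht
  have htE : ∀ v, t v ∈ M.edgeSet.toFinset := by
    intro v
    simp only [ht, Set.mem_toFinset, Subgraph.mem_edgeSet]
    exact (hu v).choose_spec.1
  have hcard := Finset.card_eq_sum_card_fiberwise (s := Finset.univ) (fun v _ => htE v)
  rw [Finset.card_univ] at hcard
  have hfib : ∀ e ∈ M.edgeSet.toFinset,
      (Finset.univ.filter (fun v => t v = e)).card = 2 := by
    intro e he
    induction e with
    | h x y =>
      rw [Set.mem_toFinset, Subgraph.mem_edgeSet] at he
      have hxy : x ≠ y := he.ne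
      have hset : (Finset.univ.filter (fun v => t v = s(x, y))) = {x, y} := by
        ext v
        simp only [Finset.mem_filter, Finset.mem_univ, true_and, Finset.mem_insert,
          Finset.mem_singleton]
        constructor
        · intro hv
          rw [ht] at hv
          rcases Sym2.eq_iff.mp hv with ⟨h1, _⟩ | ⟨h2, _⟩
          · exact Or.inl h1
          · exact Or.inr h2
        · rintro (rfl | rfl)
          · have : (hu v).choose = y := ((hu v).choose_spec.2 y he).symm
            simp [ht, this]
          · have : (hu v).choose = x := ((hu v).choose_spec.2 x he.symm).symm
            simp [ht, this, Sym2.eq_swap]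
      rw [hset, Finset.card_insert_of_notMem (by simp [hxy]), Finset.card_singleton]
  rw [Finset.sum_congr rfl hfib, Finset.sum_const, smul_eq_mul] at hcard
  rw [Set.ncard_eq_toFinset_card' M.edgeSet]
  omega

private lemma odd_dist_iff {a b : ℕ} : Odd (Nat.dist a b) ↔ Odd (a + b) := by
  simp only [Nat.odd_iff, Nat.dist]
  omega

/-- For a strong graceful labelling `f` of a tree `T` on an even number of vertices with
perfect matching `M`, an edge `uv` has odd label `|f u - f v|` iff `uv ∈ M`. -/
theorem odd_label_iff_mem_matching {V : Type} [Fintype V] (G : SimpleGraph V)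
    (hT : G.IsTree) (hEven : Even (Fintype.card V))
    (M : G.Subgraph) (hM : M.IsPerfectMatching)
    (f : V → ℕ) (hf : IsStrongGracefulLabeling G M f) :
    ∀ u v : V, G.Adj u v → (Odd (Nat.dist (f u) (f v)) ↔ M.Adj u v) := by
  classical
  intro u v huv
  obtain ⟨⟨hinj, hbound, hgra⟩, hsum⟩ := hf
  set n := Fintype.card V with hn
  have hVne : Nonempty V := ⟨u⟩
  have hn2 : 2 ≤ n := by
    have h1 : 1 ≤ n := Fintype.card_pos
    rcases hEven with ⟨k, hk⟩; omega
  have hodd_n1 : Odd (n - 1) := by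
    rcases hEven with ⟨k, hk⟩; rw [Nat.odd_iff]; omega
  have hedge : G.edgeSet.ncard = n - 1 := by
    have hcd : G.edgeFinset.card + 1 = n := hT.card_edgeFinset
    rw [← G.coe_edgeFinset, Set.ncard_coe_finset]
    omega
  constructor
  · -- odd label → in matching
    intro hO
    by_contra hM'
    set F : Sym2 V → ℕ := Sym2.lift ⟨fun a b => Nat.dist (f a) (f b),
      fun a b => Nat.dist_comm (f a) (f b)⟩ with hF
    set S : Finset (Sym2 V) := insert s(u, v) M.edgeSet.toFinset with hS
    set O : Finset ℕ := (Finset.range n).filter (fun k => Odd k) with hO'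
    have hmaps : ∀ e ∈ S, F e ∈ O := by
      intro e he
      rw [hS, Finset.mem_insert] at he
      rw [hO', Finset.mem_filter, Finset.mem_range]
      rcases he with rfl | he
      · refine ⟨?_, hO⟩
        have h1 := hbound u
        have h2 := hbound v
        rw [hedge] at h1 h2
        simp only [hF, Sym2.lift_mk, Nat.dist]
        omega
      · induction e with
        | h x y =>
          rw [Set.mem_toFinset, Subgraph.mem_edgeSet] at he
          have hs := hsum x y he
          simp only [hF, Sym2.lift_mk]
          constructor
          · simp only [Nat.dist]; omega
          · rw [odd_dist_iff, hs]; exact hodd_n1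
    have hinjOn : Set.InjOn F ↑S := by
      intro e₁ he₁ e₂ he₂ heq
      have hGe : ∀ e ∈ S, e ∈ G.edgeSet := by
        intro e he
        rw [hS, Finset.mem_insert] at he
        rcases he with rfl | he
        · exact huv
        · rw [Set.mem_toFinset] at he
          exact M.edgeSet_subset he
      have h1 := hGe e₁ he₁
      have h2 := hGe e₂ he₂
      induction e₁ with
      | h a b =>
        induction e₂ with
        | h c d =>
          rw [SimpleGraph.mem_edgeSet] at h1 h2
          exact hgra a b c d h1 h2 heq
    have hle : S.card ≤ O.card := Finset.card_le_card_of_injOn F hmaps hinjOn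
    have hScard : S.card = n / 2 + 1 := by
      rw [hS, Finset.card_insert_of_notMem (by
        rw [Set.mem_toFinset, Subgraph.mem_edgeSet]; exact hM')]
      have := matching_card hM
      rw [Set.ncard_eq_toFinset_card' M.edgeSet] at this
      omega
    have hOcard : O.card = n / 2 := card_odd_range n
    omega
  · -- in matching → odd label
    intro hAdj
    rw [odd_dist_iff, hsum u v hAdj]
    exact hodd_n1
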